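/- arXiv:2411.02612 — 2 statements merged into one kernel-verified Lean document; each statement's English description precedes it below -/
import Mathlib

section
/- Let f be a real-valued EO signature of arity 2n ≥ 4 such that for all distinct i,j both f^{x_i≠x_j} and f^{x_i≠⁻x_j} satisfy ARS or -ARS. Then f(α)² = f(ᾱ)² for every α ∈ 𝔽₂^{2n}. -/
open Finset

/-- Hamming weight of a Boolean vector. -/
def wtB {ι : Type*} [Fintype ι] (a : ι → Bool) : ℕ :=
  (Finset.univ.filter fun i => a i = true).card

/-- Componentwise XOR of three Boolean vectors. -/
def xor3 {ι : Type*} (a b c : ι → Bool) : ι → Bool :=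
  fun i => Bool.xor (a i) (Bool.xor (b i) (c i))

/-- A (support of a) signature is affine if it is nonempty and closed under α⊕β⊕γ. -/
def AffineS {ι : Type*} [Fintype ι] [DecidableEq ι] (S : Finset (ι → Bool)) : Prop :=
  S.Nonempty ∧ ∀ a ∈ S, ∀ b ∈ S, ∀ c ∈ S, xor3 a b c ∈ S

/-- Componentwise complement. -/
def cmpl {ι : Type*} (a : ι → Bool) : ι → Bool := fun i => !(a i)

/-- A real-valued EO signature vanishes on all vectors whose weight is not half the arity. -/
def IsEOR {ι : Type*} [Fintype ι] (f : (ι → Bool) → ℝ) : Prop :=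
  ∀ a, 2 * wtB a ≠ Fintype.card ι → f a = 0

/-- Arrow reversal symmetry. -/
def ARS {ι : Type*} (f : (ι → Bool) → ℝ) : Prop := ∀ a, f a = f (cmpl a)

/-- Minus arrow reversal symmetry. -/
def NegARS {ι : Type*} (f : (ι → Bool) → ℝ) : Prop := ∀ a, f a = - f (cmpl a)

/-- Extend an assignment on the variables other than `i, j` by `x_i = a`, `x_j = b`. -/
def extIJ {N : ℕ} (i j : Fin N) (a b : Bool)
    (β : {l : Fin N // l ≠ i ∧ l ≠ j} → Bool) : Fin N → Bool :=
  fun l => if h1 : l = i then a else if h2 : l = j then b else β ⟨l, h1, h2⟩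

/-- `f^{x_i ≠ x_j} = f_{ij}^{01} + f_{ij}^{10}`. -/
def neqP {N : ℕ} (f : (Fin N → Bool) → ℝ) (i j : Fin N) :
    ({l : Fin N // l ≠ i ∧ l ≠ j} → Bool) → ℝ :=
  fun β => f (extIJ i j false true β) + f (extIJ i j true false β)

/-- `f^{x_i ≠⁻ x_j} = f_{ij}^{01} - f_{ij}^{10}`. -/
def neqM {N : ℕ} (f : (Fin N → Bool) → ℝ) (i j : Fin N) :
    ({l : Fin N // l ≠ i ∧ l ≠ j} → Bool) → ℝ :=
  fun β => f (extIJ i j false true β) - f (extIJ i j true false β)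


/-- Swap the values at a `false` position `i` and a `true` position `j`. -/
def swapIJ {N : ℕ} (i j : Fin N) (α : Fin N → Bool) : Fin N → Bool :=
  fun l => if l = i then true else if l = j then false else α l

lemma extIJ_cmpl' {N : ℕ} (i j : Fin N) (a b : Bool)
    (β : {l : Fin N // l ≠ i ∧ l ≠ j} → Bool) :
    extIJ i j a b (cmpl β) = cmpl (extIJ i j (!a) (!b) β) := by
  funext l
  simp only [extIJ, cmpl]
  split_ifs <;> simp

lemma key {N : ℕ} (f : (Fin N → Bool) → ℝ) (i j : Fin N) (hij : i ≠ j)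
    (hP : ARS (neqP f i j) ∨ NegARS (neqP f i j))
    (hM : ARS (neqM f i j) ∨ NegARS (neqM f i j))
    (α : Fin N → Bool) (hi : α i = false) (hj : α j = true) :
    ((f α)^2 = (f (cmpl (swapIJ i j α)))^2 ∧ (f (swapIJ i j α))^2 = (f (cmpl α))^2) ∨
    ((f α)^2 = (f (cmpl α))^2 ∧ (f (swapIJ i j α))^2 = (f (cmpl (swapIJ i j α)))^2) := by
  set β : {l : Fin N // l ≠ i ∧ l ≠ j} → Bool := fun l => α l.1 with hβ
  have h01 : extIJ i j false true β = α := by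
    funext l; simp only [extIJ, hβ]
    split_ifs with h1 h2
    · rw [h1, hi]
    · rw [h2, hj]
    · rfl
  have h10 : extIJ i j true false β = swapIJ i j α := by
    funext l; simp only [extIJ, swapIJ, hβ]
    split_ifs <;> rfl
  have hc01 : extIJ i j false true (cmpl β) = cmpl (swapIJ i j α) := by
    have := extIJ_cmpl' i j false true β
    simpa [h10] using this
  have hc10 : extIJ i j true false (cmpl β) = cmpl α := by
    have := extIJ_cmpl' i j true false β
    simpa [h01] using this
  rcases hP with h1 | h1 <;> rcases hM with h2 | h2
  · have e1 := h1 β; have e2 := h2 β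
    simp only [neqP, neqM, h01, h10, hc01, hc10] at e1 e2
    left
    have hA : f α = f (cmpl (swapIJ i j α)) := by linarith
    have hB : f (swapIJ i j α) = f (cmpl α) := by linarith
    rw [hA, hB]; exact ⟨rfl, rfl⟩
  · have e1 := h1 β; have e2 := h2 β
    simp only [neqP, neqM, h01, h10, hc01, hc10] at e1 e2
    right
    have hA : f α = f (cmpl α) := by linarith
    have hB : f (swapIJ i j α) = f (cmpl (swapIJ i j α)) := by linarith
    rw [hA, hB]; exact ⟨rfl, rfl⟩
  · have e1 := h1 β; have e2 := h2 β
    simp only [neqP, neqM, h01, h10, hc01, hc10] at e1 e2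
    right
    have hA : f α = - f (cmpl α) := by linarith
    have hB : f (swapIJ i j α) = - f (cmpl (swapIJ i j α)) := by linarith
    rw [hA, hB]; constructor <;> ring
  · have e1 := h1 β; have e2 := h2 β
    simp only [neqP, neqM, h01, h10, hc01, hc10] at e1 e2
    left
    have hA : f α = - f (cmpl (swapIJ i j α)) := by linarith
    have hB : f (swapIJ i j α) = - f (cmpl α) := by linarith
    rw [hA, hB]; constructor <;> ring
theorem stmt16 {n : ℕ} (hn : 2 ≤ n) (f : (Fin (2 * n) → Bool) → ℝ)
    (hEO : IsEOR f)
    (hP : ∀ i j : Fin (2 * n), i ≠ j → ARS (neqP f i j) ∨ NegARS (neqP f i j))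
    (hM : ∀ i j : Fin (2 * n), i ≠ j → ARS (neqM f i j) ∨ NegARS (neqM f i j)) :
    ∀ a : Fin (2 * n) → Bool, (f a) ^ 2 = (f (cmpl a)) ^ 2 := by
  intro a
  have hcard : Fintype.card (Fin (2 * n)) = 2 * n := by simp
  have hsum : wtB a + (Finset.univ.filter fun i => a i = false).card = 2 * n := by
    have h := Finset.card_filter_add_card_filter_not
      (s := (Finset.univ : Finset (Fin (2 * n)))) (p := fun i => a i = true)
    have h2 : (Finset.univ.filter fun i => ¬ (a i = true)).card
        = (Finset.univ.filter fun i => a i = false).card := by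
      congr 1; ext l; simp
    rw [h2] at h
    simpa [wtB, hcard] using h
  by_cases hw : 2 * wtB a = 2 * n
  · -- weight n case
    have haTcard : (Finset.univ.filter fun i => a i = true).card = n := by
      unfold wtB at hw; omega
    have haFcard : (Finset.univ.filter fun i => a i = false).card = n := by omega
    obtain ⟨j, hjmem, j', hj'mem, hjj'⟩ :=
      Finset.one_lt_card.mp (by rw [haTcard]; omega :
        1 < (Finset.univ.filter fun i => a i = true).card)
    obtain ⟨i, himem⟩ := Finset.card_pos.mp (by rw [haFcard]; omega :
        0 < (Finset.univ.filter fun i => a i = false).card)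
    simp only [Finset.mem_filter, Finset.mem_univ, true_and] at hjmem hj'mem himem
    have hij : i ≠ j := fun h => by rw [h, hjmem] at himem; exact Bool.noConfusion himem
    have hij' : i ≠ j' := fun h => by rw [h, hj'mem] at himem; exact Bool.noConfusion himem
    set α' := swapIJ i j a with hα'
    have hα'j : α' j = false := by simp [hα', swapIJ, Ne.symm hij]
    have hα'j' : α' j' = true := by simp [hα', swapIJ, Ne.symm hij', Ne.symm hjj', hj'mem]
    have hswap2 : swapIJ j j' α' = swapIJ i j' a := by
      funext l
      simp only [hα', swapIJ]
      by_cases h1 : l = j <;> by_cases h2 : l = j' <;> by_cases h3 : l = i <;>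
        simp_all
    rcases key f i j hij (hP i j hij) (hM i j hij) a himem hjmem with ⟨e1, e2⟩ | ⟨e1, _⟩
    · rcases key f j j' hjj' (hP j j' hjj') (hM j j' hjj') α' hα'j hα'j' with
        ⟨e3, e4⟩ | ⟨_, e3⟩
      · rw [hswap2] at e4
        rcases key f i j' hij' (hP i j' hij') (hM i j' hij') a himem hj'mem with
          ⟨_, e6⟩ | ⟨e5, _⟩
        · linarith
        · exact e5
      · linarith
    · exact e1
  · -- f vanishes on both a and cmpl a
    have h1 : f a = 0 := hEO a (by rw [hcard]; exact hw)
    have hcF : wtB (cmpl a) = (Finset.univ.filter fun i => a i = false).card := by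
      unfold wtB cmpl; congr 1; ext l; simp
    have h2 : f (cmpl a) = 0 := hEO _ (by rw [hcard, hcF]; omega)
    rw [h1, h2]
end

section
/- Let f be a real-valued EO signature of arity 2n ≥ 4 that does not satisfy ARS. Then there exist distinct indices i,j such that f^{x_i≠x_j} = f_{ij}^{01} + f_{ij}^{10} is a nonzero EO signature of arity 2n−2 that does not satisfy ARS. -/
open Finset

lemma extIJ_apply_i {N} {i j : Fin N} {a b β} : extIJ i j a b β i = a := by
  simp [extIJ]

lemma extIJ_apply_j {N} {i j : Fin N} (h : j ≠ i) {a b β} : extIJ i j a b β j = b := by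
  simp [extIJ, h]

lemma extIJ_apply_other {N} {i j l : Fin N} (h1 : l ≠ i) (h2 : l ≠ j) {a b β} :
    extIJ i j a b β l = β ⟨l, h1, h2⟩ := by
  simp [extIJ, h1, h2]

lemma cmpl_extIJ {N} {i j : Fin N} {a b β} :
    cmpl (extIJ i j a b β) = extIJ i j (!a) (!b) (cmpl β) := by
  funext l
  by_cases h1 : l = i
  · subst h1; simp [cmpl, extIJ_apply_i]
  by_cases h2 : l = j
  · subst h2; simp [cmpl, extIJ, h1]
  · simp [cmpl, extIJ_apply_other h1 h2]

lemma extIJ_restrict {N} {i j : Fin N} {a b : Bool} {α : Fin N → Bool}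
    (hi : α i = a) (hj : α j = b) :
    extIJ i j a b (fun l => α l.1) = α := by
  funext l
  by_cases h1 : l = i
  · subst h1; rw [extIJ_apply_i, hi]
  by_cases h2 : l = j
  · subst h2; rw [extIJ_apply_j h1, hj]
  · rw [extIJ_apply_other h1 h2]

lemma wtB_extIJ_ft {N} {i j : Fin N} (hij : i ≠ j) (β) :
    wtB (extIJ i j false true β) = wtB β + 1 := by
  unfold wtB
  have hset : (univ.filter fun l => extIJ i j false true β l = true) =
      insert j ((univ.filter fun s : {l : Fin N // l ≠ i ∧ l ≠ j} => β s = true).image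
        Subtype.val) := by
    ext l
    simp only [mem_filter, mem_univ, true_and, mem_insert, mem_image]
    constructor
    · intro h
      by_cases h1 : l = i
      · subst h1; rw [extIJ_apply_i] at h; exact absurd h (by simp)
      by_cases h2 : l = j
      · exact Or.inl h2
      · rw [extIJ_apply_other h1 h2] at h
        exact Or.inr ⟨⟨l, h1, h2⟩, h, rfl⟩
    · rintro (rfl | ⟨⟨m, hm1, hm2⟩, hm, rfl⟩)
      · exact extIJ_apply_j (Ne.symm hij)
      · rw [extIJ_apply_other hm1 hm2]; exact hm
  rw [hset, card_insert_of_notMem (by simp), card_image_of_injective _ Subtype.val_injective]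

lemma wtB_extIJ_tf {N} {i j : Fin N} (hij : i ≠ j) (β) :
    wtB (extIJ i j true false β) = wtB β + 1 := by
  unfold wtB
  have hset : (univ.filter fun l => extIJ i j true false β l = true) =
      insert i ((univ.filter fun s : {l : Fin N // l ≠ i ∧ l ≠ j} => β s = true).image
        Subtype.val) := by
    ext l
    simp only [mem_filter, mem_univ, true_and, mem_insert, mem_image]
    constructor
    · intro h
      by_cases h1 : l = i
      · exact Or.inl h1
      by_cases h2 : l = j
      · subst h2; rw [extIJ_apply_j (Ne.symm hij)] at h; exact absurd h (by simp)
      · rw [extIJ_apply_other h1 h2] at h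
        exact Or.inr ⟨⟨l, h1, h2⟩, h, rfl⟩
    · rintro (rfl | ⟨⟨m, hm1, hm2⟩, hm, rfl⟩)
      · exact extIJ_apply_i
      · rw [extIJ_apply_other hm1 hm2]; exact hm
  rw [hset, card_insert_of_notMem (by simp), card_image_of_injective _ Subtype.val_injective]

lemma card_sub2 {N} {i j : Fin N} (hij : i ≠ j) :
    Fintype.card {l : Fin N // l ≠ i ∧ l ≠ j} = N - 2 := by
  rw [Fintype.card_subtype]
  have : (univ.filter fun l : Fin N => l ≠ i ∧ l ≠ j) = univ \ {i, j} := by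
    ext l; simp [not_or]
  rw [this, card_sdiff_of_subset (subset_univ _), card_pair hij, card_univ, Fintype.card_fin]

lemma wtB_cmpl {ι : Type*} [Fintype ι] [DecidableEq ι] (α : ι → Bool) :
    wtB (cmpl α) = Fintype.card ι - wtB α := by
  unfold wtB
  have : (univ.filter fun l => cmpl α l = true) = univ \ (univ.filter fun l => α l = true) := by
    ext l; simp [cmpl]
  rw [this, card_sdiff_of_subset (filter_subset _ _), card_univ]

theorem stmt19 {n : ℕ} (hn : 2 ≤ n) (f : (Fin (2 * n) → Bool) → ℝ)
    (hEO : IsEOR f) (hnz : ∃ a, f a ≠ 0) (hnARS : ¬ ARS f) :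
    ∃ i j : Fin (2 * n), i ≠ j ∧ (∃ β, neqP f i j β ≠ 0) ∧
      IsEOR (neqP f i j) ∧ ¬ ARS (neqP f i j) := by
  classical
  set g : (Fin (2 * n) → Bool) → ℝ := fun a => f a - f (cmpl a) with hg_def
  -- g vanishes off weight n
  have hgEO : ∀ a, wtB a ≠ n → g a = 0 := by
    intro a ha
    have h1 : f a = 0 := hEO a (by simp [Fintype.card_fin]; omega)
    have h2 : f (cmpl a) = 0 := by
      apply hEO
      rw [wtB_cmpl, Fintype.card_fin]
      have hle : wtB a ≤ 2 * n := by
        unfold wtB; exact (card_filter_le _ _).trans (by simp)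
      omega
    simp [hg_def, h1, h2]
  -- key claim
  have key : ∃ i j : Fin (2 * n), i ≠ j ∧ ∃ β,
      g (extIJ i j false true β) + g (extIJ i j true false β) ≠ 0 := by
    by_contra H
    push_neg at H
    obtain ⟨α, hα⟩ : ∃ a, g a ≠ 0 := by
      simp only [ARS, not_forall] at hnARS
      obtain ⟨a, ha⟩ := hnARS
      exact ⟨a, sub_ne_zero_of_ne ha⟩
    have hw : wtB α = n := by
      by_contra hw; exact hα (hgEO α hw)
    -- two distinct zeros
    have hZcard : (univ.filter fun l => α l = false).card = n := by
      have : (univ.filter fun l => α l = false) =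
          univ \ (univ.filter fun l => α l = true) := by
        ext l; simp
      rw [this, card_sdiff_of_subset (filter_subset _ _), card_univ, Fintype.card_fin]
      change 2 * n - wtB α = n
      omega
    obtain ⟨i1, hi1, i2, hi2, hi12⟩ := Finset.one_lt_card.mp
      (by rw [hZcard]; omega : 1 < (univ.filter fun l => α l = false).card)
    obtain ⟨j, hj⟩ := Finset.card_pos.mp
      (by change 0 < wtB α; omega : 0 < (univ.filter fun l => α l = true).card)
    simp only [mem_filter, mem_univ, true_and] at hi1 hi2 hj
    have hi1j : i1 ≠ j := fun h => by rw [h, hj] at hi1; exact absurd hi1 (by simp)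
    have hi2j : i2 ≠ j := fun h => by rw [h, hj] at hi2; exact absurd hi2 (by simp)
    -- edge 1: pair (i1, j)
    have e1 := H i1 j hi1j (fun l => α l.1)
    rw [extIJ_restrict hi1 hj] at e1
    set α' := extIJ i1 j true false (fun l : {l // l ≠ i1 ∧ l ≠ j} => α l.1) with hα'
    -- edge 2: pair (i2, j)
    have e2 := H i2 j hi2j (fun l => α l.1)
    rw [extIJ_restrict hi2 hj] at e2
    set α'' := extIJ i2 j true false (fun l : {l // l ≠ i2 ∧ l ≠ j} => α l.1) with hα''
    -- edge 3: pair (i2, i1) applied to α'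
    have hα'i2 : α' i2 = false := by
      rw [hα', extIJ_apply_other (hi12.symm) hi2j]; exact hi2
    have hα'i1 : α' i1 = true := by rw [hα', extIJ_apply_i]
    have e3 := H i2 i1 hi12.symm (fun l => α' l.1)
    rw [extIJ_restrict hα'i2 hα'i1] at e3
    have hswap : extIJ i2 i1 true false (fun l : {l // l ≠ i2 ∧ l ≠ i1} => α' l.1) = α'' := by
      funext l
      by_cases h1 : l = i2
      · subst h1; rw [extIJ_apply_i, hα'', extIJ_apply_i]
      by_cases h2 : l = i1
      · subst h2
        rw [extIJ_apply_j hi12, hα'', extIJ_apply_other h1 hi1j]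
        exact hi1.symm
      · rw [extIJ_apply_other h1 h2]
        by_cases h3 : l = j
        · subst h3
          rw [hα', extIJ_apply_j (Ne.symm hi1j), hα'', extIJ_apply_j (Ne.symm hi2j)]
        · rw [hα', extIJ_apply_other h2 h3, hα'', extIJ_apply_other h1 h3]
    rw [hswap] at e3
    -- combine
    have : g α = 0 := by linarith
    exact hα this
  obtain ⟨i, j, hij, β0, hβ0⟩ := key
  refine ⟨i, j, hij, ?_, ?_, ?_⟩
  · -- nonzero: shown after ¬ARS; prove directly
    by_contra hz
    push_neg at hz
    apply hβ0
    have h1 := hz β0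
    have h2 := hz (cmpl β0)
    simp only [neqP] at h1 h2
    have hc1 : extIJ i j false true (cmpl β0) = cmpl (extIJ i j true false β0) := by
      rw [cmpl_extIJ]; simp
    have hc2 : extIJ i j true false (cmpl β0) = cmpl (extIJ i j false true β0) := by
      rw [cmpl_extIJ]; simp
    rw [hc1, hc2] at h2
    simp only [hg_def]
    linarith
  · -- EO
    intro β hβ
    rw [card_sub2 hij] at hβ
    have hle : wtB β ≤ 2 * n - 2 := by
      unfold wtB
      calc (univ.filter fun s => β s = true).card ≤ _ := card_filter_le _ _
        _ = 2 * n - 2 := by rw [card_univ, card_sub2 hij]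
    have h1 : f (extIJ i j false true β) = 0 := by
      apply hEO; rw [wtB_extIJ_ft hij, Fintype.card_fin]; omega
    have h2 : f (extIJ i j true false β) = 0 := by
      apply hEO; rw [wtB_extIJ_tf hij, Fintype.card_fin]; omega
    simp [neqP, h1, h2]
  · -- not ARS
    intro hARS
    apply hβ0
    have h := hARS β0
    simp only [neqP] at h
    have hc1 : extIJ i j false true (cmpl β0) = cmpl (extIJ i j true false β0) := by
      rw [cmpl_extIJ]; simp
    have hc2 : extIJ i j true false (cmpl β0) = cmpl (extIJ i j false true β0) := by
      rw [cmpl_extIJ]; simp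
    rw [hc1, hc2] at h
    simp only [hg_def]
    linarith
end
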